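/- Let k ≥ 2, let ℓ = k - 1, and let s = 2ℓ^k + 1. Consider the complete split graph K*_{k,s}, obtained from a k-clique K by adding s independent vertices each adjacent to all of K. Then in every partition of the edge set of K*_{k,s} into ℓ parts, some part contains a subgraph isomorphic to K_{2,3}. Consequently the outerthickness of K*_{k,s} is at least k. -/

import Mathlib

/-- The complete split graph `K*_{k,s}`: a `k`-clique plus `s` independent vertices
each adjacent to every vertex of the clique. -/
def completeSplitGraph (k s : ℕ) : SimpleGraph (Fin k ⊕ Fin s) :=
  SimpleGraph.fromRel (fun a _ => a.isLeft = true)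

/-- For `k ≥ 2`, `ℓ = k-1`, `s = 2ℓ^k+1`: every partition of the edges of the complete
split graph `K*_{k,s}` into `ℓ` parts has a part containing a copy of `K_{2,3}`. -/
theorem completeSplitGraph_outerthickness (k : ℕ) (hk : 2 ≤ k)
    (c : Sym2 (Fin k ⊕ Fin (2 * (k - 1) ^ k + 1)) → Fin (k - 1)) :
    ∃ (i : Fin (k - 1)) (g : (Fin 2 ⊕ Fin 3) ↪ (Fin k ⊕ Fin (2 * (k - 1) ^ k + 1))),
      ∀ u v, (completeBipartiteGraph (Fin 2) (Fin 3)).Adj u v →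
        (completeSplitGraph k (2 * (k - 1) ^ k + 1)).Adj (g u) (g v) ∧
        c s(g u, g v) = i := by
  have hℓpos : 0 < k - 1 := by omega
  let f : Fin (2 * (k - 1) ^ k + 1) → (Fin k → Fin (k - 1)) := fun w u => c s(Sum.inl u, Sum.inr w)
  have hcard : Fintype.card (Fin k → Fin (k - 1)) * 2 < Fintype.card (Fin (2 * (k - 1) ^ k + 1)) := by
    simp only [Fintype.card_fun, Fintype.card_fin]
    omega
  obtain ⟨v0, hv0⟩ := Fintype.exists_lt_card_fiber_of_mul_lt_card f hcard
  have h3 : 3 ≤ (Finset.univ.filter fun w => f w = v0).card := hv0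
  obtain ⟨t, hts, ht3⟩ := Finset.exists_subset_card_eq h3
  obtain ⟨w1, w2, w3, h12, h13, h23, ht⟩ := Finset.card_eq_three.mp ht3
  have hw : ∀ m : Fin 3, f (![w1, w2, w3] m) = v0 := by
    intro m
    have : ∀ w ∈ t, f w = v0 := by
      intro w hwmem
      have := hts hwmem
      simpa using this
    fin_cases m <;> simp only [Matrix.cons_val_zero, Matrix.cons_val_one, Matrix.head_cons,
      Matrix.cons_val_two, Matrix.tail_cons] <;>
      exact this _ (by rw [ht]; simp)
  obtain ⟨u1, u2, hu12, huv⟩ := Fintype.exists_ne_map_eq_of_card_lt v0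
    (by simp only [Fintype.card_fin]; omega)
  have hvu : ∀ j : Fin 2, v0 (![u1, u2] j) = v0 u1 := by
    intro j; fin_cases j <;> simp [huv.symm]
  refine ⟨v0 u1,
    ⟨Sum.elim (fun j => Sum.inl (![u1, u2] j)) (fun m => Sum.inr (![w1, w2, w3] m)), ?_⟩, ?_⟩
  · intro a b hab
    have hu : Function.Injective (![u1, u2]) := by
      simp [Function.Injective, Fin.forall_fin_two, hu12, hu12.symm]
    have hwinj : Function.Injective (![w1, w2, w3]) := by
      simp [Function.Injective, Fin.forall_fin_succ, h12, h13, h23, h12.symm, h13.symm, h23.symm]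
    cases a <;> cases b <;> simp_all [Sum.elim] <;>
      first
        | exact (by simp [Function.Injective, Fin.forall_fin_two, hu12, Ne.symm hu12] : Function.Injective ![u1, u2]) hab
        | exact hwinj hab
  · intro u v huv'
    have key : ∀ (j : Fin 2) (m : Fin 3),
        (completeSplitGraph k (2 * (k - 1) ^ k + 1)).Adj (Sum.inl (![u1, u2] j)) (Sum.inr (![w1, w2, w3] m)) ∧
        c s(Sum.inl (![u1, u2] j), Sum.inr (![w1, w2, w3] m)) = v0 u1 := by
      intro j m
      constructor
      · simp [completeSplitGraph, SimpleGraph.fromRel_adj]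
      · have := congrFun (hw m) (![u1, u2] j)
        simp only [f] at this
        rw [this, hvu j]
    rcases u with j | m <;> rcases v with j' | m' <;>
      skip
    · simp [completeBipartiteGraph] at huv'
    · exact key j m'
    · obtain ⟨h1, h2⟩ := key j' m
      exact ⟨h1.symm, by rwa [Sym2.eq_swap] at h2⟩
    · simp [completeBipartiteGraph] at huv'
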